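/- Let X be a subset of a real normed vector space, let f : X → ℝ, let λ > 0, L ≥ 0, B ≥ 0, let (x_k)_{k≥0} be a sequence in X, and let (z_k)_{k≥0} be nonnegative reals with |z_k − z_0| ≤ B for all k ≥ 0. Suppose that with step sizes α_k = 1/(λ(k+2)) the fundamental inequality α_k (f(x_k) − f(x)) ≤ (1 − λ α_k) ‖x_k − x‖² − ‖x_{k+1} − x‖² + λ α_k (z_k − z_{k+1}) + α_k² L²/2 holds for every k ≥ 0 and every x ∈ X. Then for every N ≥ 0 and every x ∈ X, the telescoped bound holds: (Σ_{k=0}^{N} (f(x_k) − f(x))) + λ (N+2) ‖x_{N+1} − x‖² ≤ λ ‖x_0 − x‖² + λ B + (L²/(2λ)) · log(N+2). -/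

import Mathlib

lemma sum_inv_le_log (N : ℕ) :
    ∑ k ∈ Finset.range (N + 1), 1 / ((k : ℝ) + 2) ≤ Real.log ((N : ℝ) + 2) := by
  induction N with
  | zero =>
    simp only [Finset.range_one, Finset.sum_singleton, Nat.cast_zero]
    norm_num
    rw [Real.le_log_iff_exp_le (by norm_num)]
    have hsq : Real.exp (1/2) * Real.exp (1/2) = Real.exp 1 := by
      rw [← Real.exp_add]; norm_num
    nlinarith [Real.exp_one_lt_d9, Real.exp_pos (1/2 : ℝ)]
  | succ n ih =>
    rw [Finset.sum_range_succ]
    have hkey : 1 / ((n : ℝ) + 1 + 2) ≤ Real.log ((n:ℝ)+1+2) - Real.log ((n:ℝ)+2) := by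
      have hpos : (0:ℝ) < (n:ℝ) + 2 := by positivity
      have hpos2 : (0:ℝ) < (n:ℝ) + 3 := by positivity
      have := Real.log_le_sub_one_of_pos (show (0:ℝ) < ((n:ℝ)+2)/((n:ℝ)+3) by positivity)
      rw [Real.log_div (by positivity) (by positivity)] at this
      have h3 : ((n:ℝ)+2)/((n:ℝ)+3) - 1 = -(1/((n:ℝ)+3)) := by field_simp; ring
      have e : ((n:ℝ)+1+2) = ((n:ℝ)+3) := by ring
      rw [e]
      nlinarith
    push_cast at ih ⊢
    linarith

/-- Telescoped form of the mirror-descent fundamental inequality. -/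
theorem mirror_descent_telescoped {E : Type*} [NormedAddCommGroup E] [NormedSpace ℝ E]
    (X : Set E) (f : E → ℝ)
    (lam L B : ℝ) (hlam : 0 < lam) (hL : 0 ≤ L) (hB : 0 ≤ B)
    (x : ℕ → E) (hxX : ∀ k, x k ∈ X)
    (z : ℕ → ℝ) (hz : ∀ k, 0 ≤ z k) (hzB : ∀ k, |z k - z 0| ≤ B)
    (α : ℕ → ℝ) (hα : ∀ k, α k = 1 / (lam * ((k : ℝ) + 2)))
    (hfund : ∀ k, ∀ y ∈ X,
      α k * (f (x k) - f y) ≤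
        (1 - lam * α k) * ‖x k - y‖ ^ 2 - ‖x (k + 1) - y‖ ^ 2
          + lam * α k * (z k - z (k + 1)) + α k ^ 2 * L ^ 2 / 2) :
    ∀ N : ℕ, ∀ y ∈ X,
      (∑ k ∈ Finset.range (N + 1), (f (x k) - f y))
          + lam * ((N : ℝ) + 2) * ‖x (N + 1) - y‖ ^ 2 ≤
        lam * ‖x 0 - y‖ ^ 2 + lam * B + L ^ 2 / (2 * lam) * Real.log ((N : ℝ) + 2) := by
  intro N y hy
  -- per-step inequality, multiplied by lam*(k+2)
  have step : ∀ k : ℕ,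
      (f (x k) - f y) + lam * ((k:ℝ) + 2) * ‖x (k+1) - y‖ ^ 2 ≤
        lam * ((k:ℝ) + 1) * ‖x k - y‖ ^ 2 + lam * (z k - z (k+1))
          + L ^ 2 / (2 * lam) * (1 / ((k:ℝ) + 2)) := by
    intro k
    have h := hfund k y hy
    rw [hα] at h
    have hc : (0:ℝ) < lam * ((k:ℝ) + 2) := by positivity
    have hk2 : (0:ℝ) < (k:ℝ) + 2 := by positivity
    have h1 : lam * (1 / (lam * ((k:ℝ)+2))) = 1 / ((k:ℝ)+2) := by
      field_simp
    rw [h1] at h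
    have h2 := mul_le_mul_of_nonneg_left h (le_of_lt hc)
    -- now simplify
    have e1 : lam * ((k:ℝ)+2) * (1 / (lam * ((k:ℝ)+2)) * (f (x k) - f y))
        = f (x k) - f y := by field_simp
    have e2 : lam * ((k:ℝ)+2) * (1 - 1/((k:ℝ)+2)) = lam * ((k:ℝ)+1) := by
      field_simp; ring
    have e3 : lam * ((k:ℝ)+2) * (1/((k:ℝ)+2) * (z k - z (k+1))) = lam * (z k - z (k+1)) := by
      field_simp
    have e4 : lam * ((k:ℝ)+2) * ((1 / (lam * ((k:ℝ)+2)))^2 * L^2 / 2)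
        = L^2 / (2*lam) * (1/((k:ℝ)+2)) := by
      field_simp
    calc (f (x k) - f y) + lam * ((k:ℝ) + 2) * ‖x (k+1) - y‖ ^ 2
        = lam * ((k:ℝ)+2) * (1 / (lam * ((k:ℝ)+2)) * (f (x k) - f y))
          + lam * ((k:ℝ) + 2) * ‖x (k+1) - y‖ ^ 2 := by rw [e1]
      _ ≤ lam * ((k:ℝ)+2) * ((1 - 1/((k:ℝ)+2)) * ‖x k - y‖^2 - ‖x (k+1) - y‖^2
            + 1/((k:ℝ)+2) * (z k - z (k+1)) + (1 / (lam * ((k:ℝ)+2)))^2 * L^2 / 2)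
          + lam * ((k:ℝ) + 2) * ‖x (k+1) - y‖ ^ 2 := by linarith [h2]
      _ = lam * ((k:ℝ)+2) * (1 - 1/((k:ℝ)+2)) * ‖x k - y‖^2
          + lam * ((k:ℝ)+2) * (1/((k:ℝ)+2) * (z k - z (k+1)))
          + lam * ((k:ℝ)+2) * ((1 / (lam * ((k:ℝ)+2)))^2 * L^2 / 2) := by ring
      _ = lam * ((k:ℝ)+1) * ‖x k - y‖^2 + lam * (z k - z (k+1))
          + L^2/(2*lam) * (1/((k:ℝ)+2)) := by rw [e2, e3, e4]
  -- telescoped bound with exact terms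
  have tele : ∀ N : ℕ,
      (∑ k ∈ Finset.range (N + 1), (f (x k) - f y))
          + lam * ((N : ℝ) + 2) * ‖x (N + 1) - y‖ ^ 2 ≤
        lam * ‖x 0 - y‖ ^ 2 + lam * (z 0 - z (N+1))
          + L ^ 2 / (2 * lam) * ∑ k ∈ Finset.range (N + 1), 1 / ((k:ℝ) + 2) := by
    intro N
    induction N with
    | zero =>
      simpa using step 0
    | succ n ih =>
      rw [Finset.sum_range_succ, Finset.sum_range_succ (f := fun k => 1 / ((k:ℝ)+2))]
      have hs := step (n+1)
      push_cast at hs ih ⊢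
      nlinarith [hs, ih]
  have hzb := hzB (N+1)
  have hzbound : z 0 - z (N+1) ≤ B := by
    have := abs_le.mp hzb
    linarith [this.1]
  have hlog := sum_inv_le_log N
  have hmul : L ^ 2 / (2 * lam) * ∑ k ∈ Finset.range (N + 1), 1 / ((k:ℝ) + 2)
      ≤ L ^ 2 / (2 * lam) * Real.log ((N : ℝ) + 2) :=
    mul_le_mul_of_nonneg_left hlog (by positivity)
  have := tele N
  nlinarith [this, hmul, hzbound, hlam]
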